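/- arXiv:1605.06596 — 2 statements merged into one kernel-verified Lean document; each statement's English description precedes it below -/
import Mathlib

section
/- Let Q be a finite quiver with involution σ, duality structure (s, τ), and σ-compatible stability θ. Let M be a self-dual representation with σ-Harder–Narasimhan filtration 0 = U'_0 ⊂ ⋯ ⊂ U'_{r'} ⊂ M; put d'^k = dim-vector(U'_k/U'_{k−1}) and e'^∞ = dim-vector(M//U'_{r'}). Suppose M admits a chain of isotropic subrepresentations 0 = V_0 ⊆ V_1 ⊆ ⋯ ⊆ V_s ⊆ M with dim-vector(V_k/V_{k−1}) = d^k for k = 1,…,s and dim-vector(M//V_s) = e^∞, where each d^k is nonzero, μ(d^1) > ⋯ > μ(d^s) > 0, and σ(e^∞) = e^∞. Then every vertex of the polygon P(d^•, e^∞) lies on or below the polygon P(d'^•, e'^∞). -/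
open scoped BigOperators

/-- A finite quiver. -/
structure FinQuiver where
  V : Type
  A : Type
  [fintypeV : Fintype V]
  [fintypeA : Fintype A]
  [decEqV : DecidableEq V]
  [decEqA : DecidableEq A]
  src : A → V
  tgt : A → V

attribute [instance] FinQuiver.fintypeV FinQuiver.fintypeA FinQuiver.decEqV FinQuiver.decEqA

/-- A finite-dimensional complex representation of a quiver. -/
structure QRep (Q : FinQuiver) where
  carrier : Q.V → Type
  [acg : ∀ i, AddCommGroup (carrier i)]
  [mod : ∀ i, Module ℂ (carrier i)]
  [fd : ∀ i, FiniteDimensional ℂ (carrier i)]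
  map : ∀ a : Q.A, carrier (Q.src a) →ₗ[ℂ] carrier (Q.tgt a)

attribute [instance] QRep.acg QRep.mod QRep.fd

namespace QRep

variable {Q : FinQuiver}

/-- A family of subspaces of a representation. -/
abbrev SubFam (X : QRep Q) := ∀ i, Submodule ℂ (X.carrier i)

/-- The family of subspaces is a subrepresentation: it is stable under all structure maps. -/
def IsSubRep (X : QRep Q) (V : X.SubFam) : Prop :=
  ∀ a : Q.A, ∀ x ∈ V (Q.src a), X.map a x ∈ V (Q.tgt a)

/-- Dimension vector (with values in `ℤ`) of a family of subspaces. -/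
noncomputable def dimZ {X : QRep Q} (V : X.SubFam) : Q.V → ℤ :=
  fun i => (Module.finrank ℂ (V i) : ℤ)

/-- Dimension vector (with values in `ℤ`) of a representation. -/
noncomputable def dimVecZ (X : QRep Q) : Q.V → ℤ :=
  fun i => (Module.finrank ℂ (X.carrier i) : ℤ)

/-- The slope of a dimension vector with respect to a stability `θ`. -/
noncomputable def slope (θ : (Q.V → ℤ) →+ ℤ) (d : Q.V → ℤ) : ℚ :=
  (θ d : ℚ) / ((∑ i, d i : ℤ) : ℚ)

/-- A representation is semistable when every nonzero subrepresentation has slope at most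
the slope of the representation. -/
def Semistable (θ : (Q.V → ℤ) →+ ℤ) (X : QRep Q) : Prop :=
  ∀ V : X.SubFam, X.IsSubRep V → V ≠ ⊥ → slope θ (dimZ V) ≤ slope θ X.dimVecZ

/-- Cast along an equality of vertices. -/
def castEquiv (X : QRep Q) {i j : Q.V} (h : i = j) : X.carrier i ≃ₗ[ℂ] X.carrier j := by
  subst h; exact LinearEquiv.refl ℂ _

end QRep

/-- An involution of a quiver. -/
structure QInv (Q : FinQuiver) where
  onV : Q.V → Q.V
  onA : Q.A → Q.A
  invV : ∀ i, onV (onV i) = i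
  invA : ∀ a, onA (onA a) = a
  src_onA : ∀ a, Q.src (onA a) = onV (Q.tgt a)
  tgt_onA : ∀ a, Q.tgt (onA a) = onV (Q.src a)
  fix_onA : ∀ a, Q.tgt a = onV (Q.src a) → onA a = a

/-- A duality structure on a quiver with involution. -/
structure Duality (Q : FinQuiver) (σ : QInv Q) where
  s : Q.V → ℤ
  τ : Q.A → ℤ
  s_pm : ∀ i, s i = 1 ∨ s i = -1
  τ_pm : ∀ a, τ a = 1 ∨ τ a = -1
  s_inv : ∀ i, s (σ.onV i) = s i
  ττ : ∀ a, τ a * τ (σ.onA a) = s (Q.src a) * s (Q.tgt a)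

namespace QRep

variable {Q : FinQuiver}

/-- A stability is σ-compatible if `θ ∘ σ = -θ`. -/
def SigmaCompatible (σ : QInv Q) (θ : (Q.V → ℤ) →+ ℤ) : Prop :=
  ∀ d : Q.V → ℤ, θ (fun i => d (σ.onV i)) = - θ d

/-- The dual representation `S(U)`, with `S(U)_i = (U_{σ(i)})^*` and
`S(u)_α = τ_α ⬝ (u_{σ(α)})^∨`. -/
noncomputable def dualRep (σ : QInv Q) (D : Duality Q σ) (X : QRep Q) : QRep Q where
  carrier := fun i => Module.Dual ℂ (X.carrier (σ.onV i))
  map := fun a => (D.τ a : ℂ) •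
    (((X.castEquiv (σ.src_onA a)).dualMap.symm.toLinearMap).comp
      (((X.map (σ.onA a)).dualMap).comp
        ((X.castEquiv (σ.tgt_onA a)).dualMap.toLinearMap)))

end QRep

namespace QRep

variable {Q : FinQuiver}

/-- Bilinear forms on the total space `⊕ᵢ Xᵢ` of a representation. -/
abbrev Bilin (X : QRep Q) := (∀ i, X.carrier i) →ₗ[ℂ] (∀ i, X.carrier i) →ₗ[ℂ] ℂ

/-- Nondegeneracy of a bilinear form. -/
def Nondeg (X : QRep Q) (B : X.Bilin) : Prop := ∀ x, (∀ y, B x y = 0) → x = 0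

/-- Condition (i) for a self-dual representation: `M_i` and `M_j` are orthogonal
unless `i = σ(j)` (equivalently `j = σ(i)`). -/
def sdOrthBlocks (σ : QInv Q) (X : QRep Q) (B : X.Bilin) : Prop :=
  ∀ i j, j ≠ σ.onV i → ∀ (x : X.carrier i) (y : X.carrier j),
    B (Pi.single i x) (Pi.single j y) = 0

/-- Condition (ii) for a self-dual representation: `⟨x, x'⟩ = s_i ⟨x', x⟩` on
`M_i + M_{σ(i)}`. -/
def sdSymm (σ : QInv Q) (D : Duality Q σ) (X : QRep Q) (B : X.Bilin) : Prop :=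
  ∀ i (x : X.carrier i) (y : X.carrier (σ.onV i)),
    B (Pi.single i x) (Pi.single (σ.onV i) y)
      = (D.s i : ℂ) * B (Pi.single (σ.onV i) y) (Pi.single i x)

/-- Condition (iii) for a self-dual representation: `⟨m_α x, x'⟩ = τ_α ⟨x, m_{σ(α)} x'⟩`. -/
def sdArrow (σ : QInv Q) (D : Duality Q σ) (X : QRep Q) (B : X.Bilin) : Prop :=
  ∀ (a : Q.A) (x : X.carrier (Q.src a)) (y : X.carrier (σ.onV (Q.tgt a))),
    B (Pi.single (Q.tgt a) (X.map a x)) (Pi.single (σ.onV (Q.tgt a)) y)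
      = (D.τ a : ℂ) * B (Pi.single (Q.src a) x)
          (Pi.single (Q.tgt (σ.onA a)) (X.map (σ.onA a) (X.castEquiv (σ.src_onA a).symm y)))

/-- The bilinear form `B` makes `X` a self-dual representation. -/
def IsSelfDualForm (σ : QInv Q) (D : Duality Q σ) (X : QRep Q) (B : X.Bilin) : Prop :=
  Nondeg X B ∧ sdOrthBlocks σ X B ∧ sdSymm σ D X B ∧ sdArrow σ D X B

/-- The orthogonal `U^⊥` of a family of subspaces:
`U^⊥_i = {m ∈ M_i : ⟨m, x⟩ = 0 for all x ∈ U_{σ(i)}}`. -/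
noncomputable def orthFam (σ : QInv Q) (X : QRep Q) (B : X.Bilin) (U : X.SubFam) : X.SubFam :=
  fun i => ⨅ y : (U (σ.onV i)),
    LinearMap.ker ((B.comp (LinearMap.single ℂ X.carrier i)).flip
      (Pi.single (σ.onV i) (y : X.carrier (σ.onV i))))

/-- A family of subspaces is isotropic if `U ≤ U^⊥`. -/
def IsotropicFam (σ : QInv Q) (X : QRep Q) (B : X.Bilin) (U : X.SubFam) : Prop :=
  U ≤ orthFam σ X B U

/-- σ-semistability of a self-dual representation: every nonzero isotropic
subrepresentation has slope at most `0`. -/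
def SigmaSemistable (σ : QInv Q) (θ : (Q.V → ℤ) →+ ℤ) (X : QRep Q) (B : X.Bilin) : Prop :=
  ∀ U : X.SubFam, X.IsSubRep U → IsotropicFam σ X B U → U ≠ ⊥ → slope θ (dimZ U) ≤ 0

end QRep

namespace QRep

variable {Q : FinQuiver}

/-- Semistability of the subquotient `W/V` of a representation `X` (for `V ≤ W`):
every subrepresentation `Y` with `V ≤ Y ≤ W`, `Y ≠ V`, satisfies
`μ(Y/V) ≤ μ(W/V)`.  (Subrepresentations of `W/V` correspond to such `Y`.) -/
def SubquotSemistable (θ : (Q.V → ℤ) →+ ℤ) (X : QRep Q) (V W : X.SubFam) : Prop :=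
  ∀ Y : X.SubFam, X.IsSubRep Y → V ≤ Y → Y ≤ W → Y ≠ V →
    slope θ (dimZ Y - dimZ V) ≤ slope θ (dimZ W - dimZ V)

/-- σ-semistability of the self-dual subquotient `M ∕∕ V = V^⊥/V` of a self-dual
representation `(X, B)`: every isotropic subrepresentation `W` with `V ≤ W ≤ V^⊥`,
`W ≠ V` (these correspond to the nonzero isotropic subrepresentations of `M ∕∕ V`)
satisfies `μ(W/V) ≤ 0`. -/
def SigmaSemistableQuot (σ : QInv Q) (θ : (Q.V → ℤ) →+ ℤ) (X : QRep Q) (B : X.Bilin)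
    (V : X.SubFam) : Prop :=
  ∀ W : X.SubFam, X.IsSubRep W → V ≤ W → W ≤ orthFam σ X B V →
    IsotropicFam σ X B W → W ≠ V → slope θ (dimZ W - dimZ V) ≤ 0

/-- The slope of the `k`-th subquotient of a filtration. -/
noncomputable def stepSlope (θ : (Q.V → ℤ) →+ ℤ) {X : QRep Q} (r : ℕ)
    (U : Fin (r+1) → X.SubFam) (k : Fin r) : ℚ :=
  slope θ (dimZ (U k.succ) - dimZ (U k.castSucc))

/-- `U` is the σ-Harder–Narasimhan filtration `0 = U_0 ⊂ U_1 ⊂ ⋯ ⊂ U_r ⊂ M` of the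
self-dual representation `(X, B)`: an isotropic filtration with semistable subquotients
of strictly decreasing positive slopes such that `M ∕∕ U_r` is σ-semistable. -/
def IsSigmaHN (σ : QInv Q) (θ : (Q.V → ℤ) →+ ℤ) (X : QRep Q) (B : X.Bilin)
    (r : ℕ) (U : Fin (r+1) → X.SubFam) : Prop :=
  (∀ k, X.IsSubRep (U k)) ∧
  (U 0 = ⊥) ∧
  (∀ k : Fin r, U k.castSucc ≤ U k.succ) ∧
  (∀ k : Fin r, U k.castSucc ≠ U k.succ) ∧
  (∀ k, IsotropicFam σ X B (U k)) ∧
  (∀ k : Fin r, SubquotSemistable θ X (U k.castSucc) (U k.succ)) ∧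
  (∀ k l : Fin r, k < l → stepSlope θ r U l < stepSlope θ r U k) ∧
  (∀ k : Fin r, 0 < stepSlope θ r U k) ∧
  SigmaSemistableQuot σ θ X B (U (Fin.last r))

end QRep

namespace QRep

variable {Q : FinQuiver}

/-- Total dimension of a dimension vector. -/
def totalZ (d : Q.V → ℤ) : ℤ := ∑ i, d i

/-- First coordinates (partial sums of total dimensions) of the vertices of the
polygon attached to a sequence of dimension vectors. -/
def seqA (c : ℕ → Q.V → ℤ) (l : ℕ) : ℤ := ∑ k ∈ Finset.range l, totalZ (c k)

/-- Second coordinates (partial sums of `θ`-values) of the vertices of the polygon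
attached to a sequence of dimension vectors. -/
def seqB (θ : (Q.V → ℤ) →+ ℤ) (c : ℕ → Q.V → ℤ) (l : ℕ) : ℤ :=
  ∑ k ∈ Finset.range l, θ (c k)

/-- The doubled sequence `(d^1, …, d^r, e^∞, σ(d^r), …, σ(d^1))` (0-indexed) attached
to a σ-HN type `(d^•, e^∞)`. -/
def doubledSeq (σ : QInv Q) (r : ℕ) (d : ℕ → Q.V → ℤ) (e : Q.V → ℤ) : ℕ → Q.V → ℤ :=
  fun k => if k < r then d k else if k = r then e else fun i => d (2*r - k) (σ.onV i)

/-- The point `(a, b)` lies on or below the polygon with vertices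
`(A 0, B 0), …, (A m, B m)`. -/
def OnOrBelow (a b : ℤ) (m : ℕ) (A B : ℕ → ℤ) : Prop :=
  ∀ l : ℕ, 1 ≤ l → l ≤ m → A (l-1) < A l →
    (A l - A (l-1)) * b ≤ (A l - A (l-1)) * B (l-1) + (B l - B (l-1)) * (a - A (l-1))

end QRep

namespace QRep

variable {Q : FinQuiver}

/-- The sequence of dimension vectors of the subquotients of a filtration
(extended by `0` beyond the length of the filtration). -/
noncomputable def chainSteps {X : QRep Q} (r : ℕ) (U : Fin (r+1) → X.SubFam) :
    ℕ → Q.V → ℤ :=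
  fun k => if h : k < r then dimZ (U ⟨k+1, by omega⟩) - dimZ (U ⟨k, by omega⟩) else 0

/-- The dimension vector of the self-dual quotient `M ∕∕ V = V^⊥/V`. -/
noncomputable def quotDimZ (σ : QInv Q) {X : QRep Q} (B : X.Bilin) (V : X.SubFam) :
    Q.V → ℤ :=
  dimZ (orthFam σ X B V) - dimZ V

end QRep

section Aux
open QRep Module

variable {Q : FinQuiver} {σ : QInv Q} {D : Duality Q σ} {θ : (Q.V → ℤ) →+ ℤ}
variable {M : QRep Q} {B : M.Bilin}

@[simp] lemma castEquiv_rfl (M : QRep Q) {i : Q.V} (x : M.carrier i) :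
    M.castEquiv rfl x = x := rfl

lemma single_cast (M : QRep Q) {i j : Q.V} (h : i = j) (x : M.carrier i) :
    Pi.single i x = Pi.single j (M.castEquiv h x) := by subst h; rfl

lemma mem_cast {V : M.SubFam} {i j : Q.V} (h : i = j) {x : M.carrier i} (hx : x ∈ V i) :
    M.castEquiv h x ∈ V j := by subst h; simpa using hx

lemma finrank_congr (V : M.SubFam) {i j : Q.V} (h : i = j) :
    finrank ℂ (V i) = finrank ℂ (V j) := by subst h; rfl

lemma mem_orthFam {U : M.SubFam} {i : Q.V} {x : M.carrier i} :
    x ∈ orthFam σ M B U i ↔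
      ∀ y ∈ U (σ.onV i), B (Pi.single i x) (Pi.single (σ.onV i) y) = 0 := by
  simp only [orthFam, Submodule.mem_iInf, LinearMap.mem_ker, LinearMap.flip_apply,
    LinearMap.comp_apply, Subtype.forall]
  rfl

lemma left_nondeg (hB : IsSelfDualForm σ D M B) {i : Q.V} {x : M.carrier i}
    (h : ∀ y : M.carrier (σ.onV i), B (Pi.single i x) (Pi.single (σ.onV i) y) = 0) :
    x = 0 := by
  have hz : ∀ z, B (Pi.single i x) z = 0 := by
    intro z
    have hz2 : z = ∑ j, Pi.single j (z j) := (Finset.univ_sum_single z).symm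
    rw [hz2, map_sum]
    refine Finset.sum_eq_zero fun j _ => ?_
    by_cases hj : j = σ.onV i
    · subst hj; exact h _
    · exact hB.2.1 i j hj x (z j)
  have h0 := hB.1 _ hz
  have h1 := congrFun h0 i
  simpa using h1

lemma right_nondeg (hB : IsSelfDualForm σ D M B) {i : Q.V} {y : M.carrier (σ.onV i)}
    (h : ∀ x : M.carrier i, B (Pi.single i x) (Pi.single (σ.onV i) y) = 0) : y = 0 := by
  refine left_nondeg (D := D) hB (i := σ.onV i) ?_
  intro x'
  rw [single_cast M (σ.invV i) x']
  set x := M.castEquiv (σ.invV i) x' with hxdef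
  have hs := hB.2.2.1 i x y
  rw [h x] at hs
  have hsne : (D.s i : ℂ) ≠ 0 := by rcases D.s_pm i with h1 | h1 <;> simp [h1]
  exact (mul_eq_zero.mp hs.symm).resolve_left hsne

/-- The pairing `M_i → (M_{σ i})^*`. -/
noncomputable def pairMap (σ : QInv Q) (M : QRep Q) (B : M.Bilin) (i : Q.V) :
    M.carrier i →ₗ[ℂ] Module.Dual ℂ (M.carrier (σ.onV i)) :=
  (B.comp (LinearMap.single ℂ M.carrier i)).compl₂ (LinearMap.single ℂ M.carrier (σ.onV i))

lemma pairMap_apply (i : Q.V) (x : M.carrier i) (y : M.carrier (σ.onV i)) :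
    pairMap σ M B i x y = B (Pi.single i x) (Pi.single (σ.onV i) y) := rfl

lemma pairMap_injective (hB : IsSelfDualForm σ D M B) (i : Q.V) :
    Function.Injective (pairMap σ M B i) := by
  rw [← LinearMap.ker_eq_bot]
  rw [Submodule.eq_bot_iff]
  intro x hx
  rw [LinearMap.mem_ker] at hx
  exact left_nondeg (D := D) hB fun y => by
    rw [← pairMap_apply (σ := σ), hx]; rfl

lemma pairMap_flip_injective (hB : IsSelfDualForm σ D M B) (i : Q.V) :
    Function.Injective (pairMap σ M B i).flip := by
  rw [← LinearMap.ker_eq_bot]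
  rw [Submodule.eq_bot_iff]
  intro y hy
  rw [LinearMap.mem_ker] at hy
  exact right_nondeg (D := D) hB fun x => by
    rw [← pairMap_apply (σ := σ)]
    have := congrFun (congrArg (fun f => f.toFun) hy) x
    simpa using this

lemma finrank_sigma_eq (hB : IsSelfDualForm σ D M B) (i : Q.V) :
    finrank ℂ (M.carrier i) = finrank ℂ (M.carrier (σ.onV i)) := by
  have h1 := LinearMap.finrank_le_finrank_of_injective (pairMap_injective (D := D) hB i)
  have h2 := LinearMap.finrank_le_finrank_of_injective (pairMap_flip_injective (D := D) hB i)
  rw [Subspace.dual_finrank_eq] at h1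
  rw [Subspace.dual_finrank_eq] at h2
  omega

lemma pairMap_surjective (hB : IsSelfDualForm σ D M B) (i : Q.V) :
    Function.Surjective (pairMap σ M B i) := by
  rw [← LinearMap.range_eq_top]
  apply Submodule.eq_of_le_of_finrank_le le_top
  rw [LinearMap.finrank_range_of_inj (pairMap_injective (D := D) hB i)]
  rw [finrank_top, Subspace.dual_finrank_eq]
  exact (finrank_sigma_eq (D := D) hB i).ge

lemma finrank_orth (hB : IsSelfDualForm σ D M B) (W : M.SubFam) (i : Q.V) :
    finrank ℂ (orthFam σ M B W i) + finrank ℂ (W (σ.onV i)) = finrank ℂ (M.carrier i) := by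
  set g := ((W (σ.onV i)).subtype.dualMap).comp (pairMap σ M B i) with hg
  have hker : LinearMap.ker g = orthFam σ M B W i := by
    ext m
    rw [LinearMap.mem_ker, mem_orthFam]
    constructor
    · intro h y hy
      have := congrFun (congrArg (fun f => f.toFun) h) ⟨y, hy⟩
      simpa [g, pairMap_apply] using this
    · intro h
      apply LinearMap.ext
      rintro ⟨y, hy⟩
      simpa [g, pairMap_apply] using h y hy
  have hsurj : Function.Surjective g :=
    (LinearMap.dualMap_surjective_of_injective (Submodule.injective_subtype _)).comp
      (pairMap_surjective (D := D) hB i)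
  have hrn := LinearMap.finrank_range_add_finrank_ker g
  rw [hker, LinearMap.range_eq_top.mpr hsurj, finrank_top, Subspace.dual_finrank_eq] at hrn
  omega

end Aux
section Aux2
open QRep Module

variable {Q : FinQuiver} {σ : QInv Q} {D : Duality Q σ} {θ : (Q.V → ℤ) →+ ℤ}
variable {M : QRep Q} {B : M.Bilin}

lemma orth_antitone {U W : M.SubFam} (h : U ≤ W) :
    orthFam σ M B W ≤ orthFam σ M B U :=
  fun i x hx => mem_orthFam.mpr fun y hy => mem_orthFam.mp hx y (h _ hy)

lemma le_orth_flip (hB : IsSelfDualForm σ D M B) {U Y : M.SubFam}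
    (h : Y ≤ orthFam σ M B U) : U ≤ orthFam σ M B Y := by
  intro i u hu
  rw [mem_orthFam]
  intro y hy
  rw [hB.2.2.1 i u y, single_cast M (σ.invV i).symm u,
    mem_orthFam.mp (h _ hy) _ (mem_cast (σ.invV i).symm hu), mul_zero]

lemma isSubRep_orth (hB : IsSelfDualForm σ D M B) {W : M.SubFam} (hW : M.IsSubRep W) :
    M.IsSubRep (orthFam σ M B W) := by
  intro a x hx
  rw [mem_orthFam]
  intro y hy
  rw [hB.2.2.2 a x y]
  have h1 : M.castEquiv (σ.src_onA a).symm y ∈ W (Q.src (σ.onA a)) :=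
    mem_cast (σ.src_onA a).symm hy
  have h2 : M.map (σ.onA a) (M.castEquiv (σ.src_onA a).symm y) ∈ W (Q.tgt (σ.onA a)) :=
    hW _ _ h1
  have h3 := mem_cast (σ.tgt_onA a) h2
  rw [single_cast M (σ.tgt_onA a), mem_orthFam.mp hx _ h3, mul_zero]

lemma le_orth_orth (hB : IsSelfDualForm σ D M B) (W : M.SubFam) :
    W ≤ orthFam σ M B (orthFam σ M B W) :=
  le_orth_flip (D := D) hB (le_refl (orthFam σ M B W))

lemma orth_orth (hB : IsSelfDualForm σ D M B) (W : M.SubFam) :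
    orthFam σ M B (orthFam σ M B W) = W := by
  funext i
  refine (Submodule.eq_of_le_of_finrank_le (le_orth_orth (D := D) hB W i) ?_).symm
  have h1 := finrank_orth (D := D) hB (orthFam σ M B W) i
  have h2 := finrank_orth (D := D) hB W (σ.onV i)
  have h3 := finrank_sigma_eq (D := D) hB i
  have h4 : finrank ℂ (W (σ.onV (σ.onV i))) = finrank ℂ (W i) := finrank_congr W (σ.invV i)
  omega

lemma orth_bot (hB : IsSelfDualForm σ D M B) :
    orthFam σ M B (⊥ : M.SubFam) = (⊤ : M.SubFam) := by
  funext i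
  have : (⊤ : Submodule ℂ (M.carrier i)) ≤ orthFam σ M B (⊥ : M.SubFam) i := by
    intro x _
    rw [mem_orthFam]
    intro y hy
    have hy0 : y = 0 := by simpa using hy
    subst hy0
    simp
  exact top_le_iff.mp this

/-- Total dimension of a family of subspaces. -/
lemma dimZ_nonneg_mono {F Y : M.SubFam} (h : F ≤ Y) (i : Q.V) : dimZ F i ≤ dimZ Y i := by
  have := Submodule.finrank_mono (h i)
  simp only [dimZ]
  exact_mod_cast this

lemma totalZ_sub (a b : Q.V → ℤ) : totalZ (a - b) = totalZ a - totalZ b := by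
  simp [totalZ, Finset.sum_sub_distrib]

lemma totdiff_nonneg {F Y : M.SubFam} (h : F ≤ Y) : 0 ≤ totalZ (dimZ Y - dimZ F) := by
  rw [totalZ_sub]
  have : totalZ (dimZ F) ≤ totalZ (dimZ Y) :=
    Finset.sum_le_sum fun i _ => dimZ_nonneg_mono h i
  omega

lemma eq_of_le_of_totdiff {F Y : M.SubFam} (h : F ≤ Y)
    (ht : totalZ (dimZ Y - dimZ F) ≤ 0) : Y = F := by
  have hz : ∀ i ∈ Finset.univ, dimZ Y i - dimZ F i = 0 := by
    rw [← Finset.sum_eq_zero_iff_of_nonneg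
      (fun i _ => sub_nonneg.mpr (dimZ_nonneg_mono h i))]
    have h0 := totdiff_nonneg h
    have : totalZ (dimZ Y - dimZ F) = ∑ i, (dimZ Y i - dimZ F i) := by
      simp [totalZ]
    omega
  funext i
  refine (Submodule.eq_of_le_of_finrank_le (h i) ?_).symm
  have := hz i (Finset.mem_univ i)
  simp only [dimZ] at this
  omega

lemma totdiff_pos {F Y : M.SubFam} (h : F ≤ Y) (hne : Y ≠ F) :
    0 < totalZ (dimZ Y - dimZ F) := by
  rcases lt_or_ge 0 (totalZ (dimZ Y - dimZ F)) with h1 | h1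
  · exact h1
  · exact absurd (eq_of_le_of_totdiff h h1) hne

lemma sigma_perm_sum (σ : QInv Q) (f : Q.V → ℤ) : ∑ i, f (σ.onV i) = ∑ i, f i := by
  have hinv : Function.Involutive σ.onV := σ.invV
  exact Equiv.sum_comp hinv.toPerm f

lemma dimZ_orth (hB : IsSelfDualForm σ D M B) (W : M.SubFam) (i : Q.V) :
    dimZ (orthFam σ M B W) i = M.dimVecZ i - dimZ W (σ.onV i) := by
  have := finrank_orth (D := D) hB W i
  simp only [dimZ, dimVecZ]
  omega

lemma dimVecZ_sigma (hB : IsSelfDualForm σ D M B) (i : Q.V) :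
    M.dimVecZ (σ.onV i) = M.dimVecZ i := by
  have := finrank_sigma_eq (D := D) hB i
  simp only [dimVecZ]
  omega

lemma theta_dimVecZ (hB : IsSelfDualForm σ D M B) (hθ : SigmaCompatible σ θ) :
    θ M.dimVecZ = 0 := by
  have h1 := hθ M.dimVecZ
  have h2 : (fun i => M.dimVecZ (σ.onV i)) = M.dimVecZ :=
    funext fun i => dimVecZ_sigma (D := D) hB i
  rw [h2] at h1
  omega

lemma theta_orth (hB : IsSelfDualForm σ D M B) (hθ : SigmaCompatible σ θ) (W : M.SubFam) :
    θ (dimZ (orthFam σ M B W)) = θ (dimZ W) := by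
  have h1 : dimZ (orthFam σ M B W) = M.dimVecZ - fun i => dimZ W (σ.onV i) :=
    funext fun i => dimZ_orth (D := D) hB W i
  rw [h1, map_sub, theta_dimVecZ (D := D) hB hθ, hθ (dimZ W)]
  omega

lemma total_orth (hB : IsSelfDualForm σ D M B) (W : M.SubFam) :
    totalZ (dimZ (orthFam σ M B W)) = totalZ M.dimVecZ - totalZ (dimZ W) := by
  have h1 : dimZ (orthFam σ M B W) = M.dimVecZ - fun i => dimZ W (σ.onV i) :=
    funext fun i => dimZ_orth (D := D) hB W i
  rw [h1, totalZ_sub]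
  have := sigma_perm_sum σ (dimZ W)
  simp only [totalZ]
  omega

lemma isSubRep_inf {W G : M.SubFam} (hW : M.IsSubRep W) (hG : M.IsSubRep G) :
    M.IsSubRep (W ⊓ G) := by
  intro a x hx
  exact ⟨hW a x hx.1, hG a x hx.2⟩

lemma isSubRep_sup {W G : M.SubFam} (hW : M.IsSubRep W) (hG : M.IsSubRep G) :
    M.IsSubRep (W ⊔ G) := by
  intro a x hx
  have hx' : x ∈ W (Q.src a) ⊔ G (Q.src a) := hx
  rw [Submodule.mem_sup] at hx'
  obtain ⟨y, hy, z, hz, rfl⟩ := hx'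
  have : M.map a (y + z) = M.map a y + M.map a z := map_add _ _ _
  rw [this]
  exact Submodule.add_mem_sup (hW a y hy) (hG a z hz)

end Aux2
section Aux3
open QRep Module

variable {Q : FinQuiver} {σ : QInv Q} {D : Duality Q σ} {θ : (Q.V → ℤ) →+ ℤ}
variable {M : QRep Q} {B : M.Bilin}

/-- The linearized semistability bound for the "subquotient" between `F` and `G`. -/
def StepBound (θ : (Q.V → ℤ) →+ ℤ) (M : QRep Q) (F G : M.SubFam) (μ : ℚ) : Prop :=
  ∀ Y : M.SubFam, M.IsSubRep Y → F ≤ Y → Y ≤ G →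
    (θ (dimZ Y - dimZ F) : ℚ) ≤ μ * (totalZ (dimZ Y - dimZ F) : ℚ)

lemma slope_mul (d : Q.V → ℤ) (h : 0 < totalZ d) :
    (θ d : ℚ) = slope θ d * (totalZ d : ℚ) := by
  have hne : ((totalZ d : ℤ) : ℚ) ≠ 0 := by exact_mod_cast h.ne'
  unfold QRep.slope
  have h2 : ((∑ i, d i : ℤ) : ℚ) = (totalZ d : ℚ) := by norm_cast
  rw [h2]
  field_simp

lemma theta_le_of_slope_le {d : Q.V → ℤ} {μ : ℚ} (h : 0 < totalZ d)
    (hs : slope θ d ≤ μ) : (θ d : ℚ) ≤ μ * (totalZ d : ℚ) := by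
  rw [slope_mul d h]
  have hpos : (0 : ℚ) < (totalZ d : ℚ) := by exact_mod_cast h
  exact mul_le_mul_of_nonneg_right hs hpos.le

lemma stepBound_of_subquot {F G : M.SubFam} (hsq : SubquotSemistable θ M F G) :
    StepBound θ M F G (slope θ (dimZ G - dimZ F)) := by
  intro Y hY hFY hYG
  by_cases hYF : Y = F
  · subst hYF
    simp [totalZ]
  · exact theta_le_of_slope_le (totdiff_pos hFY hYF) (hsq Y hY hFY hYG hYF)

lemma sigma_ss_theta {U : M.SubFam} (hss : SigmaSemistableQuot σ θ M B U)
    {W : M.SubFam} (hWsub : M.IsSubRep W) (hUW : U ≤ W)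
    (hWorth : W ≤ orthFam σ M B U) (hWiso : IsotropicFam σ M B W) :
    θ (dimZ W) ≤ θ (dimZ U) := by
  by_cases hWU : W = U
  · rw [hWU]
  · have h1 := hss W hWsub hUW hWorth hWiso hWU
    have hpos := totdiff_pos hUW hWU
    unfold QRep.slope at h1
    have hposQ : (0 : ℚ) < ((totalZ (dimZ W - dimZ U) : ℤ) : ℚ) := by exact_mod_cast hpos
    have htot : ((∑ i, (dimZ W - dimZ U) i : ℤ) : ℚ) = ((totalZ (dimZ W - dimZ U) : ℤ) : ℚ) := by
      simp [totalZ]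
    rw [htot] at h1
    have hθ0 : (θ (dimZ W - dimZ U) : ℚ) ≤ 0 := by
      rcases div_nonpos_iff.mp h1 with ⟨h2, h3⟩ | ⟨h2, h3⟩
      · exact absurd hposQ (not_lt.mpr h3)
      · exact h2
    have hθ0' : θ (dimZ W - dimZ U) ≤ 0 := by exact_mod_cast hθ0
    rw [map_sub] at hθ0'
    omega

lemma totalZ_dimZ_le_M (W : M.SubFam) : totalZ (dimZ W) ≤ totalZ M.dimVecZ := by
  refine Finset.sum_le_sum fun i _ => ?_
  simp only [dimZ, dimVecZ]
  exact_mod_cast Submodule.finrank_le (W i)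

lemma middle_aux (hB : IsSelfDualForm σ D M B) (hθ : SigmaCompatible σ θ)
    {U : M.SubFam} (hss : SigmaSemistableQuot σ θ M B U)
    (Y : M.SubFam) (hYsub : M.IsSubRep Y) (hUY : U ≤ Y) (hYorth : Y ≤ orthFam σ M B U)
    (ih : ∀ Y' : M.SubFam, M.IsSubRep Y' → U ≤ Y' → Y' ≤ orthFam σ M B U →
      totalZ (dimZ Y) < totalZ (dimZ Y') → θ (dimZ Y') ≤ θ (dimZ U)) :
    θ (dimZ Y) ≤ θ (dimZ U) := by
  set Z := orthFam σ M B Y with hZdef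
  have hZsub : M.IsSubRep Z := isSubRep_orth (D := D) hB hYsub
  have hUZ : U ≤ Z := le_orth_flip (D := D) hB hYorth
  have hZorthU : Z ≤ orthFam σ M B U := orth_antitone hUY
  have hθZ : θ (dimZ Z) = θ (dimZ Y) := theta_orth (D := D) hB hθ Y
  by_cases hc : Y ⊔ Z = Y
  · have hZY : Z ≤ Y := by rw [← hc]; exact le_sup_right
    have hZiso : IsotropicFam σ M B Z := by
      show Z ≤ orthFam σ M B Z
      have horth : orthFam σ M B Z = Y := orth_orth (D := D) hB Y
      rw [horth]
      exact hZY
    have := sigma_ss_theta hss hZsub hUZ hZorthU hZiso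
    omega
  · have hsupsub : M.IsSubRep (Y ⊔ Z) := isSubRep_sup hYsub hZsub
    have hUsup : U ≤ Y ⊔ Z := le_trans hUY le_sup_left
    have hsuporth : Y ⊔ Z ≤ orthFam σ M B U := sup_le hYorth hZorthU
    have hlt : totalZ (dimZ Y) < totalZ (dimZ (Y ⊔ Z)) := by
      have := totdiff_pos (le_sup_left : Y ≤ Y ⊔ Z) hc
      rw [totalZ_sub] at this
      omega
    have hsup_le := ih (Y ⊔ Z) hsupsub hUsup hsuporth hlt
    have hdim : dimZ (Y ⊔ Z) + dimZ (Y ⊓ Z) = dimZ Y + dimZ Z := by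
      funext i
      have h := Submodule.finrank_sup_add_finrank_inf_eq (Y i) (Z i)
      simp only [Pi.add_apply, dimZ]
      exact_mod_cast h
    have hθadd : θ (dimZ (Y ⊔ Z)) + θ (dimZ (Y ⊓ Z)) = θ (dimZ Y) + θ (dimZ Z) := by
      rw [← map_add, ← map_add, hdim]
    have hinfiso : IsotropicFam σ M B (Y ⊓ Z) := by
      show Y ⊓ Z ≤ orthFam σ M B (Y ⊓ Z)
      exact le_trans inf_le_right (orth_antitone inf_le_left)
    have hinf_sub : M.IsSubRep (Y ⊓ Z) := isSubRep_inf hYsub hZsub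
    have hUinf : U ≤ Y ⊓ Z := le_inf hUY hUZ
    have hinf_orth : Y ⊓ Z ≤ orthFam σ M B U := le_trans inf_le_left hYorth
    have := sigma_ss_theta hss hinf_sub hUinf hinf_orth hinfiso
    omega

lemma middle_theta_le (hB : IsSelfDualForm σ D M B) (hθ : SigmaCompatible σ θ)
    {U : M.SubFam} (hss : SigmaSemistableQuot σ θ M B U) :
    ∀ Y : M.SubFam, M.IsSubRep Y → U ≤ Y → Y ≤ orthFam σ M B U →
      θ (dimZ Y) ≤ θ (dimZ U) := by
  suffices H : ∀ n : ℕ, ∀ Y : M.SubFam, M.IsSubRep Y → U ≤ Y → Y ≤ orthFam σ M B U →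
      (totalZ M.dimVecZ - totalZ (dimZ Y)).toNat < n → θ (dimZ Y) ≤ θ (dimZ U) by
    intro Y h1 h2 h3
    exact H ((totalZ M.dimVecZ - totalZ (dimZ Y)).toNat + 1) Y h1 h2 h3 (by omega)
  intro n
  induction n with
  | zero => intro Y _ _ _ hn; omega
  | succ n ih =>
    intro Y hYsub hUY hYorth hn
    refine middle_aux (D := D) hB hθ hss Y hYsub hUY hYorth ?_
    intro Y' h1 h2 h3 h4
    refine ih Y' h1 h2 h3 ?_
    have h5 := totalZ_dimZ_le_M (M := M) Y'
    omega

lemma stepBound_middle (hB : IsSelfDualForm σ D M B) (hθ : SigmaCompatible σ θ)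
    {U : M.SubFam} (hss : SigmaSemistableQuot σ θ M B U) :
    StepBound θ M U (orthFam σ M B U) 0 := by
  intro Y hY hUY hYorth
  have := middle_theta_le (D := D) hB hθ hss Y hY hUY hYorth
  rw [map_sub, zero_mul]
  have : θ (dimZ Y) - θ (dimZ U) ≤ 0 := by omega
  exact_mod_cast this

lemma stepBound_orth (hB : IsSelfDualForm σ D M B) (hθ : SigmaCompatible σ θ)
    {F G : M.SubFam} {μ : ℚ} (hFG : F ≤ G) (hsb : StepBound θ M F G μ)
    (hexact : (θ (dimZ G - dimZ F) : ℚ) = μ * (totalZ (dimZ G - dimZ F) : ℚ)) :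
    StepBound θ M (orthFam σ M B G) (orthFam σ M B F) (-μ) := by
  intro Y hY h1 h2
  set Z := orthFam σ M B Y with hZdef
  have hZsub : M.IsSubRep Z := isSubRep_orth (D := D) hB hY
  have hZG : Z ≤ G := by
    have := orth_antitone (σ := σ) (B := B) h1
    rw [orth_orth (D := D) hB G] at this
    exact this
  have hFZ : F ≤ Z := le_orth_flip (D := D) hB h2
  have hb := hsb Z hZsub hFZ hZG
  -- translate dimensions
  have hθY : θ (dimZ Y) = θ (dimZ Z) := (theta_orth (D := D) hB hθ Y).symm
  have htotZ : totalZ (dimZ Z) = totalZ M.dimVecZ - totalZ (dimZ Y) := total_orth (D := D) hB Y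
  have hθoG : θ (dimZ (orthFam σ M B G)) = θ (dimZ G) := theta_orth (D := D) hB hθ G
  have htotoG : totalZ (dimZ (orthFam σ M B G)) = totalZ M.dimVecZ - totalZ (dimZ G) :=
    total_orth (D := D) hB G
  rw [map_sub, totalZ_sub, hθoG, htotoG, hθY]
  rw [map_sub, totalZ_sub] at hb hexact
  have htotZ' : (totalZ (dimZ Z) : ℚ) = (totalZ M.dimVecZ : ℚ) - (totalZ (dimZ Y) : ℚ) := by
    exact_mod_cast htotZ
  push_cast at hb hexact ⊢
  rw [htotZ'] at hb
  linarith [hb, hexact]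
end Aux3
section Aux4
open QRep Module

variable {Q : FinQuiver} {σ : QInv Q} {D : Duality Q σ} {θ : (Q.V → ℤ) →+ ℤ}
variable {M : QRep Q} {B : M.Bilin}

lemma dim_key {W F G : M.SubFam} (hFG : F ≤ G) :
    dimZ ((W ⊓ G) ⊔ F) - dimZ F = dimZ (W ⊓ G) - dimZ (W ⊓ F) := by
  funext i
  have h := Submodule.finrank_sup_add_finrank_inf_eq (W i ⊓ G i) (F i)
  have h2 : W i ⊓ G i ⊓ F i = W i ⊓ F i := by
    rw [inf_assoc, inf_eq_right.mpr (hFG i)]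
  rw [h2] at h
  simp only [Pi.sub_apply, dimZ]
  have e1 : ((W ⊓ G) ⊔ F) i = (W i ⊓ G i) ⊔ F i := rfl
  have e2 : (W ⊓ G) i = W i ⊓ G i := rfl
  have e3 : (W ⊓ F) i = W i ⊓ F i := rfl
  rw [e1, e2, e3]
  omega

lemma delta_bound {W F G : M.SubFam} (hW : M.IsSubRep W) (hGsub : M.IsSubRep G)
    (hFsub : M.IsSubRep F) (hFG : F ≤ G) {μ : ℚ} (hsb : StepBound θ M F G μ) :
    ((θ (dimZ (W ⊓ G)) : ℚ) - (θ (dimZ (W ⊓ F)) : ℚ)) ≤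
      μ * ((totalZ (dimZ (W ⊓ G)) : ℚ) - (totalZ (dimZ (W ⊓ F)) : ℚ)) := by
  have hkey := dim_key (W := W) hFG
  have hb := hsb ((W ⊓ G) ⊔ F) (isSubRep_sup (isSubRep_inf hW hGsub) hFsub)
    le_sup_right (sup_le (le_trans inf_le_right le_rfl) hFG)
  rw [hkey, map_sub, totalZ_sub] at hb
  push_cast at hb
  exact hb

lemma delta_mono {W F G : M.SubFam} (hFG : F ≤ G) :
    totalZ (dimZ (W ⊓ F)) ≤ totalZ (dimZ (W ⊓ G)) :=
  Finset.sum_le_sum fun i _ => dimZ_nonneg_mono (inf_le_inf_left W hFG) i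

lemma delta_le_dA {W F G : M.SubFam} (hFG : F ≤ G) :
    totalZ (dimZ (W ⊓ G)) - totalZ (dimZ (W ⊓ F)) ≤
      totalZ (dimZ G) - totalZ (dimZ F) := by
  have hkey := dim_key (W := W) hFG
  have h1 : totalZ (dimZ ((W ⊓ G) ⊔ F)) ≤ totalZ (dimZ G) :=
    Finset.sum_le_sum fun i _ =>
      dimZ_nonneg_mono (sup_le (le_trans inf_le_right le_rfl) hFG) i
  have h2 := congrArg totalZ hkey
  rw [totalZ_sub, totalZ_sub] at h2
  omega

/-- The pure polygon-arithmetic inequality. -/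
lemma polygon_sum (m : ℕ) (μ dA dB dt dθ : ℕ → ℚ)
    (hθμ : ∀ k < m, dθ k ≤ μ k * dt k)
    (ht0 : ∀ k < m, 0 ≤ dt k) (htA : ∀ k < m, dt k ≤ dA k)
    (hBA : ∀ k < m, dB k = μ k * dA k)
    (hmono : ∀ j k, j ≤ k → k < m → μ k ≤ μ j) :
    ∀ j < m, (∑ k ∈ Finset.range m, dθ k) ≤ (∑ k ∈ Finset.range j, dB k)
      + μ j * ((∑ k ∈ Finset.range m, dt k) - ∑ k ∈ Finset.range j, dA k) := by
  intro j hj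
  have h1 : (∑ k ∈ Finset.range m, dθ k) ≤ ∑ k ∈ Finset.range m, μ k * dt k :=
    Finset.sum_le_sum (fun k hk => hθμ k (Finset.mem_range.mp hk))
  refine h1.trans ?_
  have hsplit : ∀ f : ℕ → ℚ, (∑ k ∈ Finset.range m, f k)
      = (∑ k ∈ Finset.range j, f k) + ∑ k ∈ Finset.Ico j m, f k := fun f =>
    (Finset.sum_range_add_sum_Ico f (le_of_lt hj)).symm
  rw [hsplit (fun k => μ k * dt k), hsplit dt]
  have e1 : ∑ k ∈ Finset.range j, (μ k * dt k)
      ≤ ∑ k ∈ Finset.range j, (dB k + (μ j * dt k - μ j * dA k)) := by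
    apply Finset.sum_le_sum
    intro k hk
    have hk' : k < j := Finset.mem_range.mp hk
    have hkm : k < m := hk'.trans hj
    rw [hBA k hkm]
    have hμ := hmono k j (le_of_lt hk') hj
    nlinarith [htA k hkm, ht0 k hkm]
  have e2 : ∑ k ∈ Finset.Ico j m, (μ k * dt k) ≤ ∑ k ∈ Finset.Ico j m, μ j * dt k := by
    apply Finset.sum_le_sum
    intro k hk
    obtain ⟨hk1, hk2⟩ := Finset.mem_Ico.mp hk
    have hμ := hmono j k hk1 hk2
    nlinarith [ht0 k hk2]
  rw [Finset.sum_add_distrib, Finset.sum_sub_distrib, ← Finset.mul_sum, ← Finset.mul_sum]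
    at e1
  rw [← Finset.mul_sum] at e2
  calc (∑ k ∈ Finset.range j, μ k * dt k) + ∑ k ∈ Finset.Ico j m, μ k * dt k
      ≤ ((∑ k ∈ Finset.range j, dB k) + (μ j * ∑ k ∈ Finset.range j, dt k
          - μ j * ∑ k ∈ Finset.range j, dA k)) + μ j * ∑ k ∈ Finset.Ico j m, dt k := by
        exact add_le_add e1 e2
    _ = (∑ k ∈ Finset.range j, dB k)
        + μ j * (((∑ k ∈ Finset.range j, dt k) + ∑ k ∈ Finset.Ico j m, dt k)
            - ∑ k ∈ Finset.range j, dA k) := by ring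

/-- The doubled filtration `U_0 ⊆ ⋯ ⊆ U_r ⊆ U_r^⊥ ⊆ ⋯ ⊆ U_0^⊥` as a function on `ℕ`. -/
noncomputable def filt (σ : QInv Q) {M : QRep Q} (B : M.Bilin) (r : ℕ)
    (U : Fin (r+1) → M.SubFam) : ℕ → M.SubFam :=
  fun l => if h : l ≤ r then U ⟨l, by omega⟩ else orthFam σ M B (U ⟨2*r+1-l, by omega⟩)

lemma U_congr {r : ℕ} (U : Fin (r+1) → M.SubFam) {a b : ℕ} (ha : a < r+1) (hb : b < r+1)
    (h : a = b) : U ⟨a, ha⟩ = U ⟨b, hb⟩ := by subst h; rfl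

lemma dimZ_bot : dimZ (⊥ : M.SubFam) = 0 := by
  funext i
  simp [dimZ]

lemma doubled_step (hB : IsSelfDualForm σ D M B) (hθ : SigmaCompatible σ θ)
    (r : ℕ) (U : Fin (r+1) → M.SubFam) :
    ∀ k ≤ 2*r,
      totalZ (doubledSeq σ r (chainSteps r U) (quotDimZ σ B (U (Fin.last r))) k)
        = totalZ (dimZ (filt σ B r U (k+1))) - totalZ (dimZ (filt σ B r U k))
      ∧ θ (doubledSeq σ r (chainSteps r U) (quotDimZ σ B (U (Fin.last r))) k)
        = θ (dimZ (filt σ B r U (k+1))) - θ (dimZ (filt σ B r U k)) := by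
  intro k hk
  rcases lt_trichotomy k r with hkr | hkr | hkr
  · have h1 : doubledSeq σ r (chainSteps r U) (quotDimZ σ B (U (Fin.last r))) k
        = dimZ (U ⟨k+1, by omega⟩) - dimZ (U ⟨k, by omega⟩) := by
      rw [doubledSeq, if_pos hkr, chainSteps, dif_pos hkr]
    have h2 : filt σ B r U k = U ⟨k, by omega⟩ := by
      rw [filt, dif_pos (by omega : k ≤ r)]
    have h3 : filt σ B r U (k+1) = U ⟨k+1, by omega⟩ := by
      rw [filt, dif_pos (by omega : k+1 ≤ r)]
    rw [h1, h2, h3, totalZ_sub, map_sub]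
    exact ⟨rfl, rfl⟩
  · have h1 : doubledSeq σ r (chainSteps r U) (quotDimZ σ B (U (Fin.last r))) k
        = quotDimZ σ B (U (Fin.last r)) := by
      rw [doubledSeq, if_neg (by omega), if_pos hkr]
    have h2 : filt σ B r U k = U (Fin.last r) := by
      rw [filt, dif_pos (by omega : k ≤ r)]
      exact U_congr U _ _ (by omega)
    have h3 : filt σ B r U (k+1) = orthFam σ M B (U (Fin.last r)) := by
      rw [filt, dif_neg (by omega)]
      exact congrArg _ (U_congr U _ _ (by omega))
    rw [h1, h2, h3, quotDimZ, totalZ_sub, map_sub]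
    exact ⟨rfl, rfl⟩
  · have hj : 2*r - k < r := by omega
    have h1 : doubledSeq σ r (chainSteps r U) (quotDimZ σ B (U (Fin.last r))) k
        = fun i => (dimZ (U ⟨2*r-k+1, by omega⟩) - dimZ (U ⟨2*r-k, by omega⟩)) (σ.onV i) := by
      rw [doubledSeq, if_neg (by omega), if_neg (by omega)]
      funext i
      rw [chainSteps, dif_pos hj]
    have h2 : filt σ B r U k = orthFam σ M B (U ⟨2*r-k+1, by omega⟩) := by
      rw [filt, dif_neg (by omega)]
      exact congrArg _ (U_congr U _ _ (by omega))
    have h3 : filt σ B r U (k+1) = orthFam σ M B (U ⟨2*r-k, by omega⟩) := by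
      rw [filt, dif_neg (by omega)]
      exact congrArg _ (U_congr U _ _ (by omega))
    constructor
    · rw [h1, h2, h3]
      have hperm := sigma_perm_sum σ (dimZ (U ⟨2*r-k+1, by omega⟩) - dimZ (U ⟨2*r-k, by omega⟩))
      have htot : totalZ (fun i => (dimZ (U ⟨2*r-k+1, by omega⟩) - dimZ (U ⟨2*r-k, by omega⟩)) (σ.onV i))
          = totalZ (dimZ (U ⟨2*r-k+1, by omega⟩) - dimZ (U ⟨2*r-k, by omega⟩)) := hperm
      rw [htot, totalZ_sub, total_orth (D := D) hB, total_orth (D := D) hB]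
      omega
    · rw [h1, h2, h3]
      have hσ := hθ (dimZ (U ⟨2*r-k+1, by omega⟩) - dimZ (U ⟨2*r-k, by omega⟩))
      rw [hσ, map_sub, theta_orth (D := D) hB hθ, theta_orth (D := D) hB hθ]
      omega

lemma seq_filt (hB : IsSelfDualForm σ D M B) (hθ : SigmaCompatible σ θ)
    (r : ℕ) (U : Fin (r+1) → M.SubFam) (hU0 : U 0 = ⊥) :
    ∀ l ≤ 2*r+1,
      seqA (doubledSeq σ r (chainSteps r U) (quotDimZ σ B (U (Fin.last r)))) l
        = totalZ (dimZ (filt σ B r U l))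
      ∧ seqB θ (doubledSeq σ r (chainSteps r U) (quotDimZ σ B (U (Fin.last r)))) l
        = θ (dimZ (filt σ B r U l)) := by
  intro l
  induction l with
  | zero =>
    intro _
    have h0 : filt σ B r U 0 = U 0 := by
      rw [filt, dif_pos (by omega : 0 ≤ r)]
      apply congrArg
      ext
      simp
    rw [h0, hU0, dimZ_bot]
    simp [seqA, seqB, totalZ]
  | succ l ih =>
    intro hl
    have hl' : l ≤ 2*r+1 := by omega
    obtain ⟨ihA, ihB⟩ := ih hl'
    obtain ⟨hsA, hsB⟩ := doubled_step (D := D) hB hθ r U l (by omega)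
    constructor
    · rw [seqA, Finset.sum_range_succ, ← seqA, ihA, hsA]; ring
    · rw [seqB, Finset.sum_range_succ, ← seqB, ihB, hsB]; ring

end Aux4
section Aux5
open QRep Module

variable {Q : FinQuiver} {σ : QInv Q} {D : Duality Q σ} {θ : (Q.V → ℤ) →+ ℤ}
variable {M : QRep Q} {B : M.Bilin}

/-- The slope of the `k`-th segment of the doubled filtration. -/
noncomputable def muSeq (θ : (Q.V → ℤ) →+ ℤ) {M : QRep Q} (r : ℕ)
    (U : Fin (r+1) → M.SubFam) : ℕ → ℚ :=
  fun k => if h : k < r then stepSlope θ r U ⟨k, h⟩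
    else if k = r then 0
    else if h2 : 2*r - k < r then -stepSlope θ r U ⟨2*r - k, h2⟩ else 0

lemma muSeq_lt {r : ℕ} {U : Fin (r+1) → M.SubFam} {a : ℕ} (h : a < r) :
    muSeq θ r U a = stepSlope θ r U ⟨a, h⟩ := by rw [muSeq, dif_pos h]

lemma muSeq_mid {r : ℕ} {U : Fin (r+1) → M.SubFam} {a : ℕ} (h : a = r) :
    muSeq θ r U a = 0 := by rw [muSeq, dif_neg (by omega), if_pos h]

lemma muSeq_gt {r : ℕ} {U : Fin (r+1) → M.SubFam} {a : ℕ} (h1 : r < a) (h2 : a ≤ 2*r) :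
    muSeq θ r U a = -stepSlope θ r U ⟨2*r - a, by omega⟩ := by
  rw [muSeq, dif_neg (by omega), if_neg (by omega), dif_pos (by omega : 2*r - a < r)]

lemma stepSlope_mk {r : ℕ} (U : Fin (r+1) → M.SubFam) (k : ℕ) (h : k < r)
    {p : k+1 < r+1} {q : k < r+1} :
    stepSlope θ r U ⟨k, h⟩ = slope θ (dimZ (U ⟨k+1, p⟩) - dimZ (U ⟨k, q⟩)) := by
  rw [stepSlope, Fin.succ_mk, Fin.castSucc_mk]

lemma filt_le_r {r : ℕ} {U : Fin (r+1) → M.SubFam} {l : ℕ} (h : l ≤ r) {p : l < r+1} :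
    filt σ B r U l = U ⟨l, p⟩ := by rw [filt, dif_pos h]

lemma filt_gt_r {r : ℕ} {U : Fin (r+1) → M.SubFam} {l : ℕ} (h : r < l)
    {p : 2*r+1-l < r+1} : filt σ B r U l = orthFam σ M B (U ⟨2*r+1-l, p⟩) := by
  rw [filt, dif_neg (by omega)]

lemma filt_zero (r : ℕ) (U : Fin (r+1) → M.SubFam) (hU0 : U 0 = ⊥) :
    filt σ B r U 0 = ⊥ := by
  rw [filt_le_r (by omega : 0 ≤ r) (p := by omega),
    show (⟨0, by omega⟩ : Fin (r+1)) = 0 by ext; simp]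
  exact hU0

lemma filt_top (r : ℕ) (U : Fin (r+1) → M.SubFam) (hB : IsSelfDualForm σ D M B)
    (hU0 : U 0 = ⊥) : filt σ B r U (2*r+1) = ⊤ := by
  rw [filt_gt_r (by omega : r < 2*r+1) (p := by omega),
    show (⟨2*r+1-(2*r+1), by omega⟩ : Fin (r+1)) = 0 by ext; simp]
  rw [hU0]
  exact orth_bot (D := D) hB

section HN
variable {r : ℕ} {U : Fin (r+1) → M.SubFam} (hB : IsSelfDualForm σ D M B)
  (hθ : SigmaCompatible σ θ) (hHN : IsSigmaHN σ θ M B r U)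

omit hB hθ in
include hHN in
lemma step_le {a : ℕ} (ha : a < r) {p : a < r+1} {q : a+1 < r+1} :
    U ⟨a, p⟩ ≤ U ⟨a+1, q⟩ := by
  have h := hHN.2.2.1 ⟨a, ha⟩
  rwa [Fin.castSucc_mk, Fin.succ_mk] at h

omit hB hθ in
include hHN in
lemma step_ne {a : ℕ} (ha : a < r) {p : a < r+1} {q : a+1 < r+1} :
    U ⟨a, p⟩ ≠ U ⟨a+1, q⟩ := by
  have h := hHN.2.2.2.1 ⟨a, ha⟩
  rwa [Fin.castSucc_mk, Fin.succ_mk] at h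

omit hB hθ in
include hHN in
lemma step_ss {a : ℕ} (ha : a < r) {p : a < r+1} {q : a+1 < r+1} :
    SubquotSemistable θ M (U ⟨a, p⟩) (U ⟨a+1, q⟩) := by
  have h := hHN.2.2.2.2.2.1 ⟨a, ha⟩
  rwa [Fin.castSucc_mk, Fin.succ_mk] at h

omit hθ in
include hB hHN in
lemma filt_subrep (l : ℕ) : M.IsSubRep (filt σ B r U l) := by
  rw [filt]
  split_ifs with h
  · exact hHN.1 _
  · exact isSubRep_orth (D := D) hB (hHN.1 _)

omit hθ in
include hB hHN in
lemma filt_mono : ∀ k ≤ 2*r, filt σ B r U k ≤ filt σ B r U (k+1) := by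
  intro k hk
  rcases lt_trichotomy k r with hkr | hkr | hkr
  · rw [filt_le_r (by omega : k ≤ r) (p := by omega),
      filt_le_r (by omega : k+1 ≤ r) (p := by omega)]
    exact step_le hHN hkr
  · rw [filt_le_r (by omega : k ≤ r) (p := by omega),
      filt_gt_r (by omega : r < k+1) (p := by omega)]
    have h1 : U ⟨k, by omega⟩ = U (Fin.last r) := U_congr U _ _ (by omega)
    have h2 : U ⟨2*r+1-(k+1), by omega⟩ = U (Fin.last r) := U_congr U _ _ (by omega)
    rw [h1, h2]
    exact hHN.2.2.2.2.1 (Fin.last r)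
  · rw [filt_gt_r (by omega : r < k) (p := by omega),
      filt_gt_r (by omega : r < k+1) (p := by omega)]
    have h1 : U ⟨2*r+1-k, by omega⟩ = U ⟨(2*r-k)+1, by omega⟩ := U_congr U _ _ (by omega)
    have h2 : U ⟨2*r+1-(k+1), by omega⟩ = U ⟨2*r-k, by omega⟩ := U_congr U _ _ (by omega)
    rw [h1, h2]
    exact orth_antitone (step_le hHN (by omega : 2*r-k < r))

omit hB hθ in
include hHN in
lemma exact_step (j : ℕ) (hj : j < r) {p : j+1 < r+1} {q : j < r+1} :
    (θ (dimZ (U ⟨j+1, p⟩) - dimZ (U ⟨j, q⟩)) : ℚ)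
      = stepSlope θ r U ⟨j, hj⟩
        * (totalZ (dimZ (U ⟨j+1, p⟩) - dimZ (U ⟨j, q⟩)) : ℚ) := by
  rw [stepSlope_mk (p := p) (q := q)]
  refine slope_mul _ (totdiff_pos (step_le hHN hj) ?_)
  exact fun h => (step_ne hHN hj) h.symm

include hB hθ hHN in
lemma filt_stepBound : ∀ k ≤ 2*r,
    StepBound θ M (filt σ B r U k) (filt σ B r U (k+1)) (muSeq θ r U k) := by
  intro k hk
  rcases lt_trichotomy k r with hkr | hkr | hkr
  · rw [filt_le_r (by omega : k ≤ r) (p := by omega),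
      filt_le_r (by omega : k+1 ≤ r) (p := by omega),
      muSeq_lt hkr, stepSlope_mk (p := by omega) (q := by omega)]
    exact stepBound_of_subquot (step_ss hHN hkr)
  · rw [filt_le_r (by omega : k ≤ r) (p := by omega),
      filt_gt_r (by omega : r < k+1) (p := by omega),
      muSeq_mid hkr]
    have h1 : U ⟨k, by omega⟩ = U (Fin.last r) := U_congr U _ _ (by omega)
    have h2 : U ⟨2*r+1-(k+1), by omega⟩ = U (Fin.last r) := U_congr U _ _ (by omega)
    rw [h1, h2]
    exact stepBound_middle (D := D) hB hθ hHN.2.2.2.2.2.2.2.2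
  · rw [filt_gt_r (by omega : r < k) (p := by omega),
      filt_gt_r (by omega : r < k+1) (p := by omega),
      muSeq_gt hkr hk]
    have h1 : U ⟨2*r+1-k, by omega⟩ = U ⟨(2*r-k)+1, by omega⟩ := U_congr U _ _ (by omega)
    have h2 : U ⟨2*r+1-(k+1), by omega⟩ = U ⟨2*r-k, by omega⟩ := U_congr U _ _ (by omega)
    rw [h1, h2, stepSlope_mk (p := by omega) (q := by omega)]
    refine stepBound_orth (D := D) hB hθ (step_le hHN (by omega : 2*r-k < r)) ?_ ?_
    · exact stepBound_of_subquot (step_ss hHN (by omega : 2*r-k < r))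
    · exact exact_step hHN (2*r-k) (by omega)

include hB hθ hHN in
lemma filt_exact : ∀ k ≤ 2*r,
    (θ (dimZ (filt σ B r U (k+1))) : ℚ) - (θ (dimZ (filt σ B r U k)) : ℚ)
      = muSeq θ r U k
        * ((totalZ (dimZ (filt σ B r U (k+1))) : ℚ)
            - (totalZ (dimZ (filt σ B r U k)) : ℚ)) := by
  intro k hk
  rcases lt_trichotomy k r with hkr | hkr | hkr
  · rw [filt_le_r (by omega : k ≤ r) (p := by omega),
      filt_le_r (by omega : k+1 ≤ r) (p := by omega), muSeq_lt hkr]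
    have hthis := exact_step hHN k hkr (p := by omega) (q := by omega)
    rw [map_sub, totalZ_sub] at hthis
    push_cast at hthis
    exact hthis
  · rw [filt_le_r (by omega : k ≤ r) (p := by omega),
      filt_gt_r (by omega : r < k+1) (p := by omega), muSeq_mid hkr, zero_mul]
    have h1 : U ⟨k, by omega⟩ = U (Fin.last r) := U_congr U _ _ (by omega)
    have h2 : U ⟨2*r+1-(k+1), by omega⟩ = U (Fin.last r) := U_congr U _ _ (by omega)
    rw [h1, h2, theta_orth (D := D) hB hθ]
    simp
  · rw [filt_gt_r (by omega : r < k) (p := by omega),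
      filt_gt_r (by omega : r < k+1) (p := by omega), muSeq_gt hkr hk]
    have h1 : U ⟨2*r+1-k, by omega⟩ = U ⟨(2*r-k)+1, by omega⟩ := U_congr U _ _ (by omega)
    have h2 : U ⟨2*r+1-(k+1), by omega⟩ = U ⟨2*r-k, by omega⟩ := U_congr U _ _ (by omega)
    rw [h1, h2]
    have hex := exact_step hHN (2*r-k) (by omega : 2*r-k < r)
      (p := by omega) (q := by omega)
    rw [map_sub, totalZ_sub] at hex
    rw [theta_orth (D := D) hB hθ, theta_orth (D := D) hB hθ,
      total_orth (D := D) hB, total_orth (D := D) hB]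
    push_cast at hex ⊢
    linarith [hex]

omit hB hθ in
include hHN in
lemma muSeq_mono : ∀ j k, j ≤ k → k ≤ 2*r → muSeq θ r U k ≤ muSeq θ r U j := by
  have hG := hHN.2.2.2.2.2.2.1
  have hH := hHN.2.2.2.2.2.2.2.1
  intro j k hjk hk
  rcases lt_trichotomy j r with hjr | hjr | hjr
  · rcases lt_trichotomy k r with hkr | hkr | hkr
    · rw [muSeq_lt hjr, muSeq_lt hkr]
      rcases eq_or_lt_of_le hjk with rfl | hlt
      · exact le_rfl
      · exact le_of_lt (hG ⟨j, hjr⟩ ⟨k, hkr⟩ hlt)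
    · rw [muSeq_lt hjr, muSeq_mid hkr]
      exact (hH ⟨j, hjr⟩).le
    · rw [muSeq_lt hjr, muSeq_gt hkr hk]
      have h1 := hH ⟨j, hjr⟩
      have h2 := hH ⟨2*r-k, by omega⟩
      linarith
  · rcases eq_or_lt_of_le hjk with rfl | hlt
    · exact le_rfl
    · rw [muSeq_mid hjr, muSeq_gt (by omega) hk]
      have := hH ⟨2*r-k, by omega⟩
      linarith
  · rw [muSeq_gt hjr (by omega), muSeq_gt (by omega) hk]
    rcases eq_or_lt_of_le hjk with rfl | hlt
    · exact le_rfl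
    · rcases Nat.eq_or_lt_of_le (by omega : 2*r-k ≤ 2*r-j) with heq | hlt2
      · have : stepSlope θ r U ⟨2*r-k, by omega⟩ = stepSlope θ r U ⟨2*r-j, by omega⟩ := by
          congr 1
          exact Fin.ext heq
        rw [this]
      · have := hG ⟨2*r-k, by omega⟩ ⟨2*r-j, by omega⟩ hlt2
        linarith

end HN
end Aux5
section Aux6
open QRep Module

variable {Q : FinQuiver} {σ : QInv Q} {D : Duality Q σ} {θ : (Q.V → ℤ) →+ ℤ}
variable {M : QRep Q} {B : M.Bilin}

lemma theta_bot : θ (dimZ (⊥ : M.SubFam)) = 0 := by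
  rw [dimZ_bot]; exact map_zero θ

lemma total_bot : totalZ (dimZ (⊥ : M.SubFam)) = 0 := by
  rw [dimZ_bot]; simp [totalZ]

lemma point_below (hB : IsSelfDualForm σ D M B) (hθ : SigmaCompatible σ θ)
    {r : ℕ} {U : Fin (r+1) → M.SubFam} (hHN : IsSigmaHN σ θ M B r U)
    (W : M.SubFam) (hW : M.IsSubRep W) :
    OnOrBelow (totalZ (dimZ W)) (θ (dimZ W)) (2*r+1)
      (seqA (doubledSeq σ r (chainSteps r U) (quotDimZ σ B (U (Fin.last r)))))
      (seqB θ (doubledSeq σ r (chainSteps r U) (quotDimZ σ B (U (Fin.last r))))) := by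
  intro l hl1 hl2 hAlt
  obtain ⟨j, rfl⟩ : ∃ j, l = j + 1 := ⟨l - 1, by omega⟩
  have hj : j ≤ 2*r := by omega
  have hseq := seq_filt (D := D) hB hθ r U hHN.2.1
  set Fl := filt σ B r U with hFldef
  set fA : ℕ → ℚ := fun k => ((totalZ (dimZ (Fl k)) : ℤ) : ℚ) with hfA
  set fB : ℕ → ℚ := fun k => ((θ (dimZ (Fl k)) : ℤ) : ℚ) with hfB
  set ft : ℕ → ℚ := fun k => ((totalZ (dimZ (W ⊓ Fl k)) : ℤ) : ℚ) with hft
  set fθ : ℕ → ℚ := fun k => ((θ (dimZ (W ⊓ Fl k)) : ℤ) : ℚ) with hfθ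
  have key := polygon_sum (2*r+1) (muSeq θ r U)
    (fun k => fA (k+1) - fA k) (fun k => fB (k+1) - fB k)
    (fun k => ft (k+1) - ft k) (fun k => fθ (k+1) - fθ k)
    (fun k hk => by
      simpa [hft, hfθ] using delta_bound (θ := θ) hW
        (filt_subrep (D := D) hB hHN (k+1)) (filt_subrep (D := D) hB hHN k)
        (filt_mono (D := D) hB hHN k (by omega)) (filt_stepBound (D := D) hB hθ hHN k (by omega)))
    (fun k hk => by
      show (0:ℚ) ≤ ft (k+1) - ft k
      have := delta_mono (W := W) (filt_mono (D := D) hB hHN k (by omega))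
      simp only [hft, sub_nonneg]
      exact_mod_cast this)
    (fun k hk => by
      show ft (k+1) - ft k ≤ fA (k+1) - fA k
      have := delta_le_dA (W := W) (filt_mono (D := D) hB hHN k (by omega))
      simp only [hft, hfA]
      have h2 : (totalZ (dimZ (W ⊓ Fl (k+1))) : ℚ) - (totalZ (dimZ (W ⊓ Fl k)) : ℚ)
          ≤ (totalZ (dimZ (Fl (k+1))) : ℚ) - (totalZ (dimZ (Fl k)) : ℚ) := by
        exact_mod_cast this
      exact h2)
    (fun k hk => filt_exact (D := D) hB hθ hHN k (by omega))
    (fun a b hab hb => muSeq_mono (θ := θ) hHN a b hab (by omega))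
    j (by omega)
  -- telescope the sums
  rw [Finset.sum_range_sub fθ, Finset.sum_range_sub fB, Finset.sum_range_sub ft,
    Finset.sum_range_sub fA] at key
  have hFl0 : Fl 0 = ⊥ := filt_zero r U hHN.2.1
  have hFlm : Fl (2*r+1) = ⊤ := filt_top (D := D) r U hB hHN.2.1
  have h0θ : fθ 0 = 0 := by simp [hfθ, hFl0, theta_bot]
  have h0t : ft 0 = 0 := by simp [hft, hFl0, total_bot]
  have h0B : fB 0 = 0 := by simp [hfB, hFl0, theta_bot]
  have h0A : fA 0 = 0 := by simp [hfA, hFl0, total_bot]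
  have hmθ : fθ (2*r+1) = ((θ (dimZ W) : ℤ) : ℚ) := by simp [hfθ, hFlm]
  have hmt : ft (2*r+1) = ((totalZ (dimZ W) : ℤ) : ℚ) := by simp [hft, hFlm]
  rw [h0θ, h0t, h0B, h0A, hmθ, hmt, sub_zero, sub_zero, sub_zero, sub_zero] at key
  -- identify the polygon vertices
  have hA1 := (hseq (j+1) (by omega)).1
  have hA0 := (hseq j (by omega)).1
  have hB1 := (hseq (j+1) (by omega)).2
  have hB0 := (hseq j (by omega)).2
  have hjj : j + 1 - 1 = j := rfl
  rw [hjj, hA1, hA0] at hAlt ⊢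
  rw [hB1, hB0]
  -- pass to ℚ
  have hApos : (0 : ℚ) < fA (j+1) - fA j := by
    simp only [hfA]
    have : (totalZ (dimZ (Fl j)) : ℚ) < (totalZ (dimZ (Fl (j+1))) : ℚ) := by
      exact_mod_cast hAlt
    linarith
  have hexact := filt_exact (D := D) hB hθ hHN j hj
  have h6 := mul_le_mul_of_nonneg_left key hApos.le
  have hEq : (fA (j+1) - fA j) * (fB j + muSeq θ r U j * (((totalZ (dimZ W) : ℤ) : ℚ) - fA j))
      = (fA (j+1) - fA j) * fB j
        + (fB (j+1) - fB j) * (((totalZ (dimZ W) : ℤ) : ℚ) - fA j) := by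
    have hex : fB (j+1) - fB j = muSeq θ r U j * (fA (j+1) - fA j) := by
      simpa [hfA, hfB] using hexact
    linear_combination (fA j - ((totalZ (dimZ W) : ℤ) : ℚ)) * hex
  rw [hEq] at h6
  have goalQ : ((totalZ (dimZ (Fl (j+1))) : ℚ) - (totalZ (dimZ (Fl j)) : ℚ))
        * ((θ (dimZ W) : ℤ) : ℚ)
      ≤ ((totalZ (dimZ (Fl (j+1))) : ℚ) - (totalZ (dimZ (Fl j)) : ℚ))
          * ((θ (dimZ (Fl j)) : ℤ) : ℚ)
        + (((θ (dimZ (Fl (j+1))) : ℤ) : ℚ) - ((θ (dimZ (Fl j)) : ℤ) : ℚ))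
          * (((totalZ (dimZ W) : ℤ) : ℚ) - ((totalZ (dimZ (Fl j)) : ℤ) : ℚ)) := by
    simpa [hfA, hfB] using h6
  have goalZ : (totalZ (dimZ (Fl (j+1))) - totalZ (dimZ (Fl j))) * θ (dimZ W)
      ≤ (totalZ (dimZ (Fl (j+1))) - totalZ (dimZ (Fl j))) * θ (dimZ (Fl j))
        + (θ (dimZ (Fl (j+1))) - θ (dimZ (Fl j)))
          * (totalZ (dimZ W) - totalZ (dimZ (Fl j))) := by
    exact_mod_cast goalQ
  exact goalZ

end Aux6
open QRep in
/-- Let `M` be a self-dual representation with σ-Harder–Narasimhan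
filtration `0 = U'_0 ⊂ ⋯ ⊂ U'_{r'} ⊂ M`, of σ-HN type `(d'^•, e'^∞)`.  If `M` admits an
isotropic filtration `0 = V_0 ⊆ ⋯ ⊆ V_s ⊆ M` of σ-HN type `(d^•, e^∞)` (nonzero `d^k`,
strictly decreasing positive slopes, `σ(e^∞) = e^∞`), then every vertex of the polygon
`P(d^•, e^∞)` lies on or below the polygon `P(d'^•, e'^∞)`. -/
theorem sigmaHN_polygon_maximal (Q : FinQuiver) (σ : QInv Q) (D : Duality Q σ)
    (θ : (Q.V → ℤ) →+ ℤ) (hθ : SigmaCompatible σ θ)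
    (M : QRep Q) (B : M.Bilin) (hB : IsSelfDualForm σ D M B)
    (r' : ℕ) (U' : Fin (r'+1) → M.SubFam) (hHN : IsSigmaHN σ θ M B r' U')
    (s : ℕ) (V : Fin (s+1) → M.SubFam)
    (hV0 : V 0 = ⊥) (hVsub : ∀ k, M.IsSubRep (V k))
    (hViso : ∀ k, IsotropicFam σ M B (V k))
    (hVmono : ∀ k : Fin s, V k.castSucc ≤ V k.succ)
    (hne : ∀ k < s, chainSteps s V k ≠ 0)
    (hpos : ∀ k < s, 0 < slope θ (chainSteps s V k))
    (hdec : ∀ k l, k < l → l < s → slope θ (chainSteps s V l) < slope θ (chainSteps s V k))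
    (he : (fun i => quotDimZ σ B (V (Fin.last s)) (σ.onV i)) = quotDimZ σ B (V (Fin.last s))) :
    ∀ l ≤ 2*s+1,
      OnOrBelow
        (seqA (doubledSeq σ s (chainSteps s V) (quotDimZ σ B (V (Fin.last s)))) l)
        (seqB θ (doubledSeq σ s (chainSteps s V) (quotDimZ σ B (V (Fin.last s)))) l)
        (2*r'+1)
        (seqA (doubledSeq σ r' (chainSteps r' U') (quotDimZ σ B (U' (Fin.last r')))))
        (seqB θ (doubledSeq σ r' (chainSteps r' U') (quotDimZ σ B (U' (Fin.last r'))))) := by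
  intro l hl
  obtain ⟨hA, hBt⟩ := seq_filt (D := D) hB hθ s V hV0 l hl
  rw [hA, hBt]
  have hWsub : M.IsSubRep (filt σ B s V l) := by
    rw [filt]
    split_ifs with h
    · exact hVsub _
    · exact isSubRep_orth (D := D) hB (hVsub _)
  exact point_below (D := D) hB hθ hHN _ hWsub
end

section
/- Let Q be a finite quiver with involution σ and duality structure (s, τ). Then: (a) the value 𝓔(d) is independent of the choice of the partitions Q_0 = Q_0^- ⊔ Q_0^σ ⊔ Q_0^+ and Q_1 = Q_1^- ⊔ Q_1^σ ⊔ Q_1^+ used in its definition; (b) for all d, d' ∈ ℤ^{Q_0}, 𝓔(d + d') = 𝓔(d) + 𝓔(d') + χ(σ(d), d'), where σ acts on ℤ^{Q_0} by permuting coordinates; (c) χ(σ(d'), σ(d)) = χ(d, d') for all d, d' ∈ ℤ^{Q_0}; in particular the bilinear form (d, d') ↦ χ(σ(d), d') is symmetric. -/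
open scoped BigOperators

/-- A choice of partitions `Q₀ = Q₀⁻ ⊔ Q₀^σ ⊔ Q₀⁺` and `Q₁ = Q₁⁻ ⊔ Q₁^σ ⊔ Q₁⁺` with
`σ(Q₀⁻) = Q₀⁺` and `σ(Q₁⁻) = Q₁⁺`, encoded by sign functions (`0` on the σ-fixed part,
`±1` on the two swapped parts). -/
structure InvPartition (Q : FinQuiver) (σ : QInv Q) where
  pV : Q.V → ℤ
  pA : Q.A → ℤ
  pV_vals : ∀ i, pV i = 0 ∨ pV i = 1 ∨ pV i = -1
  pV_zero : ∀ i, pV i = 0 ↔ σ.onV i = i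
  pV_neg : ∀ i, pV (σ.onV i) = - pV i
  pA_vals : ∀ a, pA a = 0 ∨ pA a = 1 ∨ pA a = -1
  pA_zero : ∀ a, pA a = 0 ↔ σ.onA a = a
  pA_neg : ∀ a, pA (σ.onA a) = - pA a

/-- The Euler form `χ(d, d') = Σᵢ dᵢ d'ᵢ - Σ_{α : i → j} dᵢ d'ⱼ` of a quiver. -/
def chiZ (Q : FinQuiver) (d d' : Q.V → ℤ) : ℤ :=
  ∑ i, d i * d' i - ∑ a, d (Q.src a) * d' (Q.tgt a)

/-- The function `𝓔` of a quiver with involution and duality structure, relative to a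
choice of partitions of the vertices and arrows:
`𝓔(d) = Σ_{i ∈ Q₀^σ} dᵢ(dᵢ - sᵢ)/2 + Σ_{i ∈ Q₀⁺} d_{σ(i)} dᵢ
 - Σ_{α : σ(i) → i ∈ Q₁^σ} dᵢ(dᵢ + τ_α sᵢ)/2 - Σ_{α : i → j ∈ Q₁⁺} d_{σ(i)} dⱼ`. -/
noncomputable def Efun {Q : FinQuiver} {σ : QInv Q} (D : Duality Q σ)
    (P : InvPartition Q σ) (d : Q.V → ℤ) : ℚ :=
  (∑ i ∈ Finset.univ.filter (fun i => σ.onV i = i),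
      (d i : ℚ) * ((d i : ℚ) - (D.s i : ℚ)) / 2)
  + (∑ i ∈ Finset.univ.filter (fun i => P.pV i = 1), (d (σ.onV i) : ℚ) * (d i : ℚ))
  - (∑ a ∈ Finset.univ.filter (fun a => σ.onA a = a),
      (d (Q.tgt a) : ℚ) * ((d (Q.tgt a) : ℚ) + (D.τ a : ℚ) * (D.s (Q.tgt a) : ℚ)) / 2)
  - (∑ a ∈ Finset.univ.filter (fun a => P.pA a = 1),
      (d (σ.onV (Q.src a)) : ℚ) * (d (Q.tgt a) : ℚ))

section Helpers

open Finset


section Helpers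

variable {α : Type} [Fintype α] [DecidableEq α]

lemma sum_comp_invol (e : α → α) (he : ∀ x, e (e x) = x) (g : α → ℚ) :
    ∑ x, g (e x) = ∑ x, g x :=
  Function.Bijective.sum_comp (Function.Involutive.bijective he) g

lemma sum_pos_eq_sum_neg (e : α → α) (he : ∀ x, e (e x) = x) (p : α → ℤ)
    (hneg : ∀ x, p (e x) = - p x) (g : α → ℚ) :
    ∑ x ∈ univ.filter (fun x => p x = 1), g (e x)
      = ∑ x ∈ univ.filter (fun x => p x = -1), g x := by
  refine Finset.sum_nbij' e e ?_ ?_ ?_ ?_ ?_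
  · intro a ha; simp only [mem_filter, mem_univ, true_and] at ha ⊢; rw [hneg, ha]
  · intro a ha; simp only [mem_filter, mem_univ, true_and] at ha ⊢; rw [hneg, ha]; ring
  · intro a _; exact he a
  · intro a _; exact he a
  · intro a _; rfl

lemma sum_split (e : α → α) (p : α → ℤ)
    (hvals : ∀ x, p x = 0 ∨ p x = 1 ∨ p x = -1)
    (hzero : ∀ x, p x = 0 ↔ e x = x) (g : α → ℚ) :
    ∑ x, g x = (∑ x ∈ univ.filter (fun x => e x = x), g x)
      + (∑ x ∈ univ.filter (fun x => p x = 1), g x)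
      + (∑ x ∈ univ.filter (fun x => p x = -1), g x) := by
  have h0 : univ.filter (fun x => e x = x) = univ.filter (fun x => p x = 0) := by
    apply filter_congr; intro x _; simp [hzero x]
  rw [h0, ← Finset.sum_filter_add_sum_filter_not univ (fun x => p x = 0) g, add_assoc]
  congr 1
  rw [← Finset.sum_filter_add_sum_filter_not (univ.filter (fun x => ¬ p x = 0)) (fun x => p x = 1) g]
  congr 1
  · refine Finset.sum_congr ?_ (fun _ _ => rfl)
    ext x; simp only [mem_filter, mem_univ, true_and]
    constructor
    · rintro ⟨_, h⟩; exact h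
    · intro h; exact ⟨by omega, h⟩
  · refine Finset.sum_congr ?_ (fun _ _ => rfl)
    ext x; simp only [mem_filter, mem_univ, true_and]
    rcases hvals x with h | h | h <;> simp [h]

lemma sum_pos_invariant (e : α → α) (he : ∀ x, e (e x) = x) (p : α → ℤ)
    (hvals : ∀ x, p x = 0 ∨ p x = 1 ∨ p x = -1)
    (hzero : ∀ x, p x = 0 ↔ e x = x) (hneg : ∀ x, p (e x) = - p x)
    (g : α → ℚ) (hg : ∀ x, g (e x) = g x) :
    ∑ x ∈ univ.filter (fun x => p x = 1), g x
      = ((∑ x, g x) - ∑ x ∈ univ.filter (fun x => e x = x), g x) / 2 := by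
  have h1 : ∑ x ∈ univ.filter (fun x => p x = 1), g x
      = ∑ x ∈ univ.filter (fun x => p x = -1), g x := by
    rw [← sum_pos_eq_sum_neg e he p hneg g]
    exact Finset.sum_congr rfl (fun x _ => (hg x).symm)
  have h2 := sum_split e p hvals hzero g
  rw [h1] at h2 ⊢
  linarith

end Helpers

section MainHelpers

open Finset

variable {Q : FinQuiver} {σ : QInv Q}

lemma invol_fix_src (a : Q.A) (h : σ.onA a = a) : σ.onV (Q.src a) = Q.tgt a := by
  have h1 : Q.src a = σ.onV (Q.tgt a) := by
    conv_lhs => rw [← h, σ.src_onA]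
  rw [h1, σ.invV]

lemma reindexV (d d' : Q.V → ℤ) :
    ∑ i, (d' (σ.onV i) : ℚ) * (d i : ℚ) = ∑ i, (d (σ.onV i) : ℚ) * (d' i : ℚ) := by
  rw [← Function.Bijective.sum_comp (Function.Involutive.bijective σ.invV)
    (fun i => (d (σ.onV i) : ℚ) * (d' i : ℚ))]
  apply Finset.sum_congr rfl
  intro i _
  rw [σ.invV, mul_comm]

lemma reindexA (d d' : Q.V → ℤ) :
    ∑ a, (d' (σ.onV (Q.src a)) : ℚ) * (d (Q.tgt a) : ℚ)
      = ∑ a, (d (σ.onV (Q.src a)) : ℚ) * (d' (Q.tgt a) : ℚ) := by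
  rw [← Function.Bijective.sum_comp (Function.Involutive.bijective σ.invA)
    (fun a => (d (σ.onV (Q.src a)) : ℚ) * (d' (Q.tgt a) : ℚ))]
  apply Finset.sum_congr rfl
  intro a _
  rw [σ.src_onA, σ.tgt_onA, σ.invV, mul_comm]

/-- Closed, partition-free formula for `Efun`. -/
lemma Efun_closed (D : Duality Q σ) (P : InvPartition Q σ) (d : Q.V → ℤ) :
    Efun D P d =
      (∑ i ∈ univ.filter (fun i => σ.onV i = i),
        (d i : ℚ) * ((d i : ℚ) - (D.s i : ℚ)) / 2)
      + ((∑ i, (d (σ.onV i) : ℚ) * (d i : ℚ))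
          - ∑ i ∈ univ.filter (fun i => σ.onV i = i), (d (σ.onV i) : ℚ) * (d i : ℚ)) / 2
      - (∑ a ∈ univ.filter (fun a => σ.onA a = a),
          (d (Q.tgt a) : ℚ) * ((d (Q.tgt a) : ℚ) + (D.τ a : ℚ) * (D.s (Q.tgt a) : ℚ)) / 2)
      - ((∑ a, (d (σ.onV (Q.src a)) : ℚ) * (d (Q.tgt a) : ℚ))
          - ∑ a ∈ univ.filter (fun a => σ.onA a = a),
              (d (σ.onV (Q.src a)) : ℚ) * (d (Q.tgt a) : ℚ)) / 2 := by
  have hgV : ∀ i, (d (σ.onV (σ.onV i)) : ℚ) * (d (σ.onV i) : ℚ)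
      = (d (σ.onV i) : ℚ) * (d i : ℚ) := by
    intro i; rw [σ.invV, mul_comm]
  have hgA : ∀ a, (d (σ.onV (Q.src (σ.onA a))) : ℚ) * (d (Q.tgt (σ.onA a)) : ℚ)
      = (d (σ.onV (Q.src a)) : ℚ) * (d (Q.tgt a) : ℚ) := by
    intro a; rw [σ.src_onA, σ.tgt_onA, σ.invV, mul_comm]
  unfold Efun
  rw [sum_pos_invariant σ.onV σ.invV P.pV P.pV_vals P.pV_zero P.pV_neg
      (fun i => (d (σ.onV i) : ℚ) * (d i : ℚ)) hgV,
    sum_pos_invariant σ.onA σ.invA P.pA P.pA_vals P.pA_zero P.pA_neg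
      (fun a => (d (σ.onV (Q.src a)) : ℚ) * (d (Q.tgt a) : ℚ)) hgA]

end MainHelpers


/-- (a) `𝓔(d)` is independent of the choice of partitions;
(b) `𝓔(d + d') = 𝓔(d) + 𝓔(d') + χ(σ(d), d')`;
(c) `χ(σ(d'), σ(d)) = χ(d, d')`, so `(d, d') ↦ χ(σ(d), d')` is symmetric. -/
theorem Efun_wellDefined_and_chi_symm (Q : FinQuiver) (σ : QInv Q) (D : Duality Q σ) :
    -- (a) independence of the partition
    (∀ (P P' : InvPartition Q σ) (d : Q.V → ℤ), Efun D P d = Efun D P' d) ∧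
    -- (b) 𝓔(d + d') = 𝓔(d) + 𝓔(d') + χ(σ(d), d')
    (∀ (P : InvPartition Q σ) (d d' : Q.V → ℤ),
      Efun D P (d + d') = Efun D P d + Efun D P d'
        + (chiZ Q (fun i => d (σ.onV i)) d' : ℚ)) ∧
    -- (c) χ(σ(d'), σ(d)) = χ(d, d')
    (∀ d d' : Q.V → ℤ,
      chiZ Q (fun i => d' (σ.onV i)) (fun i => d (σ.onV i)) = chiZ Q d d') ∧
    -- in particular (d, d') ↦ χ(σ(d), d') is symmetric
    (∀ d d' : Q.V → ℤ,
      chiZ Q (fun i => d (σ.onV i)) d' = chiZ Q (fun i => d' (σ.onV i)) d) := by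
  constructor
  · -- (a)
    intro P P' d
    rw [Efun_closed D P d, Efun_closed D P' d]
  refine ⟨?_, ?_, ?_⟩
  · -- (b)
    intro P d d'
    have hT1 : (∑ i ∈ Finset.univ.filter (fun i => σ.onV i = i),
          ((d + d') i : ℚ) * (((d + d') i : ℚ) - (D.s i : ℚ)) / 2)
        = (∑ i ∈ Finset.univ.filter (fun i => σ.onV i = i),
            (d i : ℚ) * ((d i : ℚ) - (D.s i : ℚ)) / 2)
          + (∑ i ∈ Finset.univ.filter (fun i => σ.onV i = i),
            (d' i : ℚ) * ((d' i : ℚ) - (D.s i : ℚ)) / 2)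
          + ∑ i ∈ Finset.univ.filter (fun i => σ.onV i = i),
              (d (σ.onV i) : ℚ) * (d' i : ℚ) := by
      rw [← Finset.sum_add_distrib, ← Finset.sum_add_distrib]
      apply Finset.sum_congr rfl
      intro i hi
      simp only [Finset.mem_filter, Finset.mem_univ, true_and] at hi
      rw [hi]
      push_cast [Pi.add_apply]
      ring
    have hSV : (∑ i, ((d + d') (σ.onV i) : ℚ) * ((d + d') i : ℚ))
        = (∑ i, (d (σ.onV i) : ℚ) * (d i : ℚ)) + (∑ i, (d' (σ.onV i) : ℚ) * (d' i : ℚ))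
          + (∑ i, (d (σ.onV i) : ℚ) * (d' i : ℚ)) + (∑ i, (d' (σ.onV i) : ℚ) * (d i : ℚ)) := by
      rw [← Finset.sum_add_distrib, ← Finset.sum_add_distrib, ← Finset.sum_add_distrib]
      apply Finset.sum_congr rfl
      intro i _
      push_cast [Pi.add_apply]
      ring
    have hFV : (∑ i ∈ Finset.univ.filter (fun i => σ.onV i = i),
          ((d + d') (σ.onV i) : ℚ) * ((d + d') i : ℚ))
        = (∑ i ∈ Finset.univ.filter (fun i => σ.onV i = i), (d (σ.onV i) : ℚ) * (d i : ℚ))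
          + (∑ i ∈ Finset.univ.filter (fun i => σ.onV i = i), (d' (σ.onV i) : ℚ) * (d' i : ℚ))
          + 2 * ∑ i ∈ Finset.univ.filter (fun i => σ.onV i = i),
              (d (σ.onV i) : ℚ) * (d' i : ℚ) := by
      rw [Finset.mul_sum, ← Finset.sum_add_distrib, ← Finset.sum_add_distrib]
      apply Finset.sum_congr rfl
      intro i hi
      simp only [Finset.mem_filter, Finset.mem_univ, true_and] at hi
      rw [hi]
      push_cast [Pi.add_apply]
      ring
    have hT3 : (∑ a ∈ Finset.univ.filter (fun a => σ.onA a = a),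
          ((d + d') (Q.tgt a) : ℚ) * (((d + d') (Q.tgt a) : ℚ)
            + (D.τ a : ℚ) * (D.s (Q.tgt a) : ℚ)) / 2)
        = (∑ a ∈ Finset.univ.filter (fun a => σ.onA a = a),
            (d (Q.tgt a) : ℚ) * ((d (Q.tgt a) : ℚ) + (D.τ a : ℚ) * (D.s (Q.tgt a) : ℚ)) / 2)
          + (∑ a ∈ Finset.univ.filter (fun a => σ.onA a = a),
            (d' (Q.tgt a) : ℚ) * ((d' (Q.tgt a) : ℚ) + (D.τ a : ℚ) * (D.s (Q.tgt a) : ℚ)) / 2)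
          + ∑ a ∈ Finset.univ.filter (fun a => σ.onA a = a),
              (d (σ.onV (Q.src a)) : ℚ) * (d' (Q.tgt a) : ℚ) := by
      rw [← Finset.sum_add_distrib, ← Finset.sum_add_distrib]
      apply Finset.sum_congr rfl
      intro a ha
      simp only [Finset.mem_filter, Finset.mem_univ, true_and] at ha
      rw [invol_fix_src a ha]
      push_cast [Pi.add_apply]
      ring
    have hSA : (∑ a, ((d + d') (σ.onV (Q.src a)) : ℚ) * ((d + d') (Q.tgt a) : ℚ))
        = (∑ a, (d (σ.onV (Q.src a)) : ℚ) * (d (Q.tgt a) : ℚ))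
          + (∑ a, (d' (σ.onV (Q.src a)) : ℚ) * (d' (Q.tgt a) : ℚ))
          + (∑ a, (d (σ.onV (Q.src a)) : ℚ) * (d' (Q.tgt a) : ℚ))
          + (∑ a, (d' (σ.onV (Q.src a)) : ℚ) * (d (Q.tgt a) : ℚ)) := by
      rw [← Finset.sum_add_distrib, ← Finset.sum_add_distrib, ← Finset.sum_add_distrib]
      apply Finset.sum_congr rfl
      intro a _
      push_cast [Pi.add_apply]
      ring
    have hFA : (∑ a ∈ Finset.univ.filter (fun a => σ.onA a = a),
          ((d + d') (σ.onV (Q.src a)) : ℚ) * ((d + d') (Q.tgt a) : ℚ))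
        = (∑ a ∈ Finset.univ.filter (fun a => σ.onA a = a),
            (d (σ.onV (Q.src a)) : ℚ) * (d (Q.tgt a) : ℚ))
          + (∑ a ∈ Finset.univ.filter (fun a => σ.onA a = a),
            (d' (σ.onV (Q.src a)) : ℚ) * (d' (Q.tgt a) : ℚ))
          + 2 * ∑ a ∈ Finset.univ.filter (fun a => σ.onA a = a),
              (d (σ.onV (Q.src a)) : ℚ) * (d' (Q.tgt a) : ℚ) := by
      rw [Finset.mul_sum, ← Finset.sum_add_distrib, ← Finset.sum_add_distrib]
      apply Finset.sum_congr rfl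
      intro a ha
      simp only [Finset.mem_filter, Finset.mem_univ, true_and] at ha
      rw [invol_fix_src a ha]
      push_cast [Pi.add_apply]
      ring
    have hrV := reindexV (σ := σ) d d'
    have hrA := reindexA (σ := σ) d d'
    have hchi : (chiZ Q (fun i => d (σ.onV i)) d' : ℚ)
        = (∑ i, (d (σ.onV i) : ℚ) * (d' i : ℚ))
          - ∑ a, (d (σ.onV (Q.src a)) : ℚ) * (d' (Q.tgt a) : ℚ) := by
      unfold chiZ
      push_cast
      ring
    rw [Efun_closed D P (d + d'), Efun_closed D P d, Efun_closed D P d']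
    rw [hT1, hSV, hFV, hT3, hSA, hFA, hchi, hrV, hrA]
    ring
  · -- (c)
    intro d d'
    unfold chiZ
    congr 1
    · rw [← Function.Bijective.sum_comp (Function.Involutive.bijective σ.invV)
        (fun i => d i * d' i)]
      apply Finset.sum_congr rfl
      intro i _
      exact mul_comm _ _
    · rw [← Function.Bijective.sum_comp (Function.Involutive.bijective σ.invA)
        (fun a => d (Q.src a) * d' (Q.tgt a))]
      apply Finset.sum_congr rfl
      intro a _
      rw [σ.src_onA, σ.tgt_onA]
      exact mul_comm _ _
  · -- symmetry
    intro d d'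
    have hc : ∀ x y : Q.V → ℤ,
        chiZ Q (fun i => y (σ.onV i)) (fun i => x (σ.onV i)) = chiZ Q x y := by
      intro x y
      unfold chiZ
      congr 1
      · rw [← Function.Bijective.sum_comp (Function.Involutive.bijective σ.invV)
          (fun i => x i * y i)]
        apply Finset.sum_congr rfl
        intro i _
        exact mul_comm _ _
      · rw [← Function.Bijective.sum_comp (Function.Involutive.bijective σ.invA)
          (fun a => x (Q.src a) * y (Q.tgt a))]
        apply Finset.sum_congr rfl
        intro a _
        rw [σ.src_onA, σ.tgt_onA]
        exact mul_comm _ _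
    have h := hc (fun i => d (σ.onV i)) d'
    simp only [σ.invV] at h
    exact h.symm
end Helpers
end
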